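/- Let R be an associative ring and I a two-sided ideal of R such that R/I is commutative and every element of I is nilpotent. Then the set of nilpotent elements of R is a two-sided ideal of R. -/

import Mathlib

/-- If `I` is a two-sided ideal of an associative ring `R` such that `R/I` is
commutative and every element of `I` is nilpotent, then the nilpotent elements
of `R` form a two-sided ideal. -/
theorem nilpotents_form_ideal
    {R : Type*} [Ring R] (I : TwoSidedIdeal R)
    (hcomm : ∀ a b : R, a * b - b * a ∈ I)
    (hnil : ∀ y ∈ I, IsNilpotent y) :
    ∃ J : TwoSidedIdeal R, ∀ x : R, x ∈ J ↔ IsNilpotent x := by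
  let f : R →+* I.ringCon.Quotient := I.ringCon.mk'
  have hker : ∀ x : R, f x = 0 → x ∈ I := by
    intro x hx
    rw [TwoSidedIdeal.mem_iff]
    exact I.ringCon.eq.mp hx
  have key : ∀ x : R, IsNilpotent (f x) → IsNilpotent x := by
    rintro x ⟨n, hn⟩
    obtain ⟨m, hm⟩ := hnil _ (hker (x ^ n) (by rw [map_pow, hn]))
    exact ⟨n * m, by rw [pow_mul, hm]⟩
  have hcomm' : ∀ a b : R, Commute (f a) (f b) := by
    intro a b
    have : f (a * b - b * a) = 0 := by
      apply I.ringCon.eq.mpr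
      rw [← TwoSidedIdeal.mem_iff]
      exact hcomm a b
    have := sub_eq_zero.mp (by simpa using this)
    simpa [Commute, SemiconjBy] using this
  refine ⟨TwoSidedIdeal.mk' {x | IsNilpotent x} ⟨1, by simp⟩
    (fun {x y} hx hy => key _ ?_) (fun {x} hx => hx.neg)
    (fun {x y} hy => key _ ?_) (fun {x y} hx => key _ ?_),
    fun x => TwoSidedIdeal.mem_mk' _ _ _ _ _ _ x⟩
  · simpa using (hcomm' x y).isNilpotent_add (hx.map f) (hy.map f)
  · simpa using (hcomm' x y).isNilpotent_mul_left (hy.map f)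
  · simpa using (hcomm' x y).isNilpotent_mul_right (hx.map f)
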